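/- Representer theorem for two-layer interpolation (Corollary 3.3): Let H(Φ,ℝ) be a reproducing kernel Hilbert space of continuous real-valued functions on Φ ⊆ ℝ^D with kernel K : Φ × Φ → ℝ, and let H(Ω,Φ) be a vector-valued reproducing kernel Hilbert space of continuous functions from Ω ⊆ ℝ^d to Φ with matrix-valued kernel 𝐊 : Ω × Ω → ℝ^{D×D}. Given pairwise distinct points x_1, …, x_N ∈ Ω and values y_1, …, y_N ∈ ℝ, consider minimizing J(f, g) = ‖f‖²_{H(Φ,ℝ)} + ‖g‖²_{H(Ω,Φ)} over all pairs (f, g) ∈ H(Φ,ℝ) × H(Ω,Φ) satisfying the interpolation constraints f(g(x_j)) = y_j for j = 1, …, N. Then any minimizer (f*, g*) satisfies g* ∈ V_X := span{ 𝐊(x_i, ·) e_j : i = 1, …, N, j = 1, …, D }, where e_j ∈ ℝ^D is the j-th unit vector. -/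

import Mathlib

open scoped RealInnerProductSpace

noncomputable section

/-- `ℝ^n` with the Euclidean (ℓ²) structure. -/
abbrev Euc (n : ℕ) : Type := EuclideanSpace ℝ (Fin n)

/-- A scalar-valued reproducing kernel Hilbert space of functions from `D` to `ℝ`. -/
structure ScalarRKHS (D : Type*) (H : Type*)
    [NormedAddCommGroup H] [InnerProductSpace ℝ H] where
  eval : H →ₗ[ℝ] D → ℝ
  eval_injective : Function.Injective eval
  K : D → D → ℝ
  kfun : D → H
  eval_kfun : ∀ x z, eval (kfun x) z = K x z
  repro : ∀ (f : H) (x : D), eval f x = ⟪f, kfun x⟫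

/-- A (vector-valued) reproducing kernel Hilbert space of functions from `D` to `ℝ^n`. -/
structure VRKHS (D : Type*) (n : ℕ) (H : Type*)
    [NormedAddCommGroup H] [InnerProductSpace ℝ H] where
  eval : H →ₗ[ℝ] D → Euc n
  eval_injective : Function.Injective eval
  K : D → D → Euc n →L[ℝ] Euc n
  kfun : D → Euc n → H
  eval_kfun : ∀ (x : D) (c : Euc n) (z : D), eval (kfun x c) z = K x z c
  repro : ∀ (g : H) (x : D) (c : Euc n), ⟪g, kfun x c⟫ = ⟪c, eval g x⟫

/-- **Representer theorem for two-layer interpolation** (Corollary 3.3).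
`Hout` is an RKHS of continuous real-valued functions on `Φ ⊆ ℝ^D`, `Hin` a vector-valued
RKHS of continuous functions from `Ω ⊆ ℝ^d` with values in `Φ`.  If the pair `(f, g)`
minimizes `J(f,g) = ‖f‖² + ‖g‖²` among all pairs satisfying the interpolation constraints
`f(g(x_j)) = y_j`, then `g ∈ V_X = span{𝐊(x_i,·) e_j : i = 1,…,N, j = 1,…,D}`. -/
theorem two_layer_interpolation_representer
    (D d N : ℕ)
    (Φ : Set (Euc D)) (Ω : Set (Euc d))
    (Hout : Type*) [NormedAddCommGroup Hout] [InnerProductSpace ℝ Hout] [CompleteSpace Hout]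
    (Hin : Type*) [NormedAddCommGroup Hin] [InnerProductSpace ℝ Hin] [CompleteSpace Hin]
    (Vout : ScalarRKHS (↥Φ) Hout)
    (houtCont : ∀ f : Hout, Continuous (Vout.eval f))
    (Vin : VRKHS (↥Ω) D Hin)
    (hinCont : ∀ g : Hin, Continuous (Vin.eval g))
    (hrange : ∀ (g : Hin) (x : Ω), Vin.eval g x ∈ Φ)
    (x : Fin N → ↥Ω) (hx : Function.Injective x) (y : Fin N → ℝ)
    (f : Hout) (g : Hin)
    (hadm : ∀ j, Vout.eval f ⟨Vin.eval g (x j), hrange g (x j)⟩ = y j)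
    (hmin : ∀ (f' : Hout) (g' : Hin),
        (∀ j, Vout.eval f' ⟨Vin.eval g' (x j), hrange g' (x j)⟩ = y j) →
        ‖f‖ ^ 2 + ‖g‖ ^ 2 ≤ ‖f'‖ ^ 2 + ‖g'‖ ^ 2) :
    g ∈ Submodule.span ℝ (Set.range fun p : Fin N × Fin D =>
      Vin.kfun (x p.1) (EuclideanSpace.single p.2 1)) := by
  set V := Submodule.span ℝ (Set.range fun p : Fin N × Fin D =>
      Vin.kfun (x p.1) (EuclideanSpace.single p.2 1)) with hV
  haveI hfd : FiniteDimensional ℝ V := by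
    apply FiniteDimensional.span_of_finite
    exact Set.finite_range _
  haveI : V.HasOrthogonalProjection := inferInstance
  set g' : Hin := (V.orthogonalProjectionOnto g : Hin) with hg'
  have hmem : ∀ (j : Fin N) (i : Fin D),
      Vin.kfun (x j) (EuclideanSpace.single i 1) ∈ V :=
    fun j i => Submodule.subset_span ⟨(j, i), rfl⟩
  have hperp : g - g' ∈ Vᗮ := V.sub_starProjection_mem_orthogonal g
  -- evaluations agree
  have heval : ∀ j : Fin N, Vin.eval g' (x j) = Vin.eval g (x j) := by
    intro j
    ext i
    have h1 : ⟪(EuclideanSpace.single i 1 : Euc D), Vin.eval g' (x j)⟫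
        = ⟪(EuclideanSpace.single i 1 : Euc D), Vin.eval g (x j)⟫ := by
      rw [← Vin.repro, ← Vin.repro]
      have := hperp _ (hmem j i)
      have h2 : ⟪g - g', Vin.kfun (x j) (EuclideanSpace.single i 1)⟫ = 0 := by
        rw [real_inner_comm]; exact this
      have h3 : ⟪g - g', Vin.kfun (x j) (EuclideanSpace.single i 1)⟫
          = ⟪g, Vin.kfun (x j) (EuclideanSpace.single i 1)⟫
            - ⟪g', Vin.kfun (x j) (EuclideanSpace.single i 1)⟫ := inner_sub_left _ _ _
      rw [h3] at h2
      linarith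
    simpa [EuclideanSpace.inner_single_left] using h1
  have hadm' : ∀ j, Vout.eval f ⟨Vin.eval g' (x j), hrange g' (x j)⟩ = y j := by
    intro j
    have : (⟨Vin.eval g' (x j), hrange g' (x j)⟩ : Φ)
        = ⟨Vin.eval g (x j), hrange g (x j)⟩ := by
      simp [heval j]
    rw [this]; exact hadm j
  have hle := hmin f g' hadm'
  have hg'le : ‖g‖ ^ 2 ≤ ‖g'‖ ^ 2 := by linarith
  have hpyth : ‖g‖ ^ 2 = ‖g'‖ ^ 2 + ‖g - g'‖ ^ 2 := by
    have horth : ⟪g', g - g'⟫ = 0 := hperp _ (V.orthogonalProjectionOnto g).2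
    have : g = g' + (g - g') := by abel
    rw [this, norm_add_sq_real, horth]
    ring_nf
    rw [show g' + (g - g') - g' = g - g' by abel]
  have hz : ‖g - g'‖ ^ 2 ≤ 0 := by linarith
  have : g - g' = 0 := by
    have := sq_nonneg ‖g - g'‖
    have hn : ‖g - g'‖ ^ 2 = 0 := le_antisymm hz this
    simpa [pow_eq_zero_iff] using hn
  have : g = g' := by rwa [sub_eq_zero] at this
  rw [this]
  exact (V.orthogonalProjectionOnto g).2
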